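/- Let P(t) = (t⁴ - 2βt² + 1)/(β² - 1) with β ≠ ±1, and set q(t) = (t² - β)/√(β² - 1), λ₀ = q + √P. Then the unit group of S_2(P) = ℂ[t,u]/(u² - P(t)) is exactly {c·λ₀^i : c ∈ ℂ*, i ∈ ℤ}, isomorphic to ℂ* × ℤ; in particular λ₀·(q - √P) = 1. -/

import Mathlib

open Polynomial

/-- The defining ideal of `S_2(P) = ℂ[t,u]/(u² - P(t))`. -/
noncomputable abbrev S2ideal (P : Polynomial ℂ) : Ideal (Polynomial (Polynomial ℂ)) :=
  Ideal.span {(X : Polynomial (Polynomial ℂ)) ^ 2 - C P}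

/-- `S_2(P) = ℂ[t,u]/(u² - P(t))`. -/
abbrev S2P (P : Polynomial ℂ) : Type :=
  Polynomial (Polynomial ℂ) ⧸ S2ideal P


namespace Stmt16
variable {P : Polynomial ℂ}

lemma mk_eq_mk {p r : Polynomial (Polynomial ℂ)} (k : Polynomial (Polynomial ℂ))
    (h : p - r = (X ^ 2 - C P) * k) :
    Ideal.Quotient.mk (S2ideal P) p = Ideal.Quotient.mk (S2ideal P) r := by
  rw [Ideal.Quotient.eq, h]
  exact Ideal.mem_span_singleton.mpr ⟨k, rfl⟩

lemma rep_mul (A B A' B' : Polynomial ℂ) :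
    Ideal.Quotient.mk (S2ideal P) (C A + C B * X) * Ideal.Quotient.mk (S2ideal P) (C A' + C B' * X)
      = Ideal.Quotient.mk (S2ideal P) (C (A*A' + P*(B*B')) + C (A*B' + A'*B) * X) := by
  rw [← map_mul]
  apply mk_eq_mk (C (B*B'))
  push_cast [Polynomial.C_mul, Polynomial.C_add]
  ring

lemma rep_surj (z : S2P P) : ∃ A B : Polynomial ℂ, z = Ideal.Quotient.mk (S2ideal P) (C A + C B * X) := by
  obtain ⟨p, rfl⟩ := Ideal.Quotient.mk_surjective z
  have hm : (X ^ 2 - C P).Monic := monic_X_pow_sub_C P (by norm_num)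
  set r := p %ₘ (X ^ 2 - C P) with hr
  refine ⟨r.coeff 0, r.coeff 1, ?_⟩
  have hdeg : r.degree < 2 := by
    have := degree_modByMonic_lt p hm
    rwa [degree_X_pow_sub_C (by norm_num)] at this
  have hle : r.degree ≤ 1 := by
    by_contra hc
    push_neg at hc
    have h2 := Nat.WithBot.add_one_le_of_lt hc
    norm_num at h2
    exact absurd hdeg (not_lt.mpr h2)
  have hrform : r = C (r.coeff 1) * X + C (r.coeff 0) := eq_X_add_C_of_degree_le_one hle
  have hpr : Ideal.Quotient.mk (S2ideal P) p = Ideal.Quotient.mk (S2ideal P) r := by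
    apply mk_eq_mk (p /ₘ (X ^ 2 - C P))
    have h3 := modByMonic_add_div p (X ^ 2 - C P)
    rw [← hr] at h3
    linear_combination -h3
  rw [hpr]
  conv_lhs => rw [hrform]
  congr 1
  ring

lemma rep_eq_zero {A B : Polynomial ℂ} (h : Ideal.Quotient.mk (S2ideal P) (C A + C B * X) = 0) :
    A = 0 ∧ B = 0 := by
  rw [Ideal.Quotient.eq_zero_iff_mem, Ideal.mem_span_singleton] at h
  have hz : C A + C B * X = 0 := by
    refine eq_zero_of_dvd_of_degree_lt h ?_
    rw [degree_X_pow_sub_C (by norm_num : 0 < 2)]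
    calc (C A + C B * X).degree ≤ max (C A).degree (C B * X).degree := degree_add_le _ _
      _ ≤ 1 := by
          apply max_le (le_trans degree_C_le (by norm_num))
          calc (C B * X).degree ≤ (C B).degree + X.degree := degree_mul_le _ _
            _ ≤ 0 + 1 := add_le_add degree_C_le degree_X_le
            _ = 1 := by norm_num
      _ < 2 := by norm_num
  constructor
  · have := congrArg (fun p => Polynomial.coeff p 0) hz
    simpa using this
  · have := congrArg (fun p => Polynomial.coeff p 1) hz
    simpa using this

lemma add_info {p r : Polynomial ℂ} {k : ℕ} (hp : p.natDegree ≤ k) (hr : r.natDegree ≤ k)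
    (h : p.coeff k + r.coeff k ≠ 0) :
    (p + r) ≠ 0 ∧ (p + r).natDegree = k ∧ (p + r).leadingCoeff = p.coeff k + r.coeff k := by
  have hc : (p + r).coeff k = p.coeff k + r.coeff k := coeff_add p r k
  have hne : (p + r) ≠ 0 := fun h0 => h (by rw [← hc, h0, coeff_zero])
  have hge : k ≤ (p + r).natDegree := le_natDegree_of_ne_zero (hc ▸ h)
  have hle : (p + r).natDegree ≤ k := le_trans (natDegree_add_le p r) (max_le hp hr)
  have hdeg : (p + r).natDegree = k := le_antisymm hle hge
  exact ⟨hne, hdeg, by rw [leadingCoeff, hdeg, hc]⟩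

lemma rep_inj {A B A' B' : Polynomial ℂ}
    (h : Ideal.Quotient.mk (S2ideal P) (C A + C B * X)
        = Ideal.Quotient.mk (S2ideal P) (C A' + C B' * X)) :
    A = A' ∧ B = B' := by
  have he : (C (A - A') + C (B - B') * X : Polynomial (Polynomial ℂ))
      = (C A + C B * X) - (C A' + C B' * X) := by
    rw [map_sub, map_sub]; ring
  have h0 : Ideal.Quotient.mk (S2ideal P) (C (A - A') + C (B - B') * X) = 0 := by
    rw [he, map_sub, h, sub_self]
  obtain ⟨h1, h2⟩ := rep_eq_zero h0
  exact ⟨sub_eq_zero.mp h1, sub_eq_zero.mp h2⟩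

variable {s : ℂ} {q : Polynomial ℂ}

lemma descent (hs0 : s ≠ 0) (hq2 : q ^ 2 = P + 1)
    (hPd : P.natDegree = 4) (hPlc : P.leadingCoeff = s⁻¹ ^ 2)
    (hqd : q.natDegree = 2) (hqlc : q.leadingCoeff = s⁻¹) :
    ∀ n : ℕ, ∀ A B : Polynomial ℂ, B.natDegree < n → ∀ c : ℂ, c ≠ 0 →
      A ^ 2 - P * B ^ 2 = C c →
      ∃ d : ℂ, d ≠ 0 ∧ ∃ a b : ℕ,
        Ideal.Quotient.mk (S2ideal P) (C A + C B * X)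
          = (algebraMap ℂ (S2P P) : ℂ →+* S2P P) d * (Ideal.Quotient.mk (S2ideal P) (C q + X)) ^ a
              * (Ideal.Quotient.mk (S2ideal P) (C q - X)) ^ b := by
  have hP0 : P ≠ 0 := fun h0 => by
    rw [h0, leadingCoeff_zero] at hPlc
    exact (pow_ne_zero 2 (inv_ne_zero hs0)) hPlc.symm
  have hq0 : q ≠ 0 := fun h0 => by
    rw [h0, leadingCoeff_zero] at hqlc
    exact (inv_ne_zero hs0) hqlc.symm
  intro n
  induction n with
  | zero => intro A B hB; omega
  | succ n ih =>
    intro A B hB c hc hnorm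
    by_cases hB0 : B = 0
    · -- base case : A is a nonzero constant
      subst hB0
      have hA2 : A ^ 2 = C c := by linear_combination hnorm
      have h0 : (A ^ 2).natDegree = 0 := by rw [hA2, natDegree_C]
      rw [natDegree_pow] at h0
      obtain ⟨d, hd⟩ := natDegree_eq_zero.mp (by omega : A.natDegree = 0)
      have hd2 : d ^ 2 = c := by
        have : C (d ^ 2) = C c := by rw [map_pow, hd, hA2]
        exact C_injective this
      have hd0 : d ≠ 0 := fun h0 => hc (by rw [← hd2, h0]; ring)
      refine ⟨d, hd0, 0, 0, ?_⟩
      rw [pow_zero, pow_zero, mul_one, mul_one, map_zero, zero_mul, add_zero, ← hd]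
      rfl
    · -- inductive case
      set m := B.natDegree with hm
      have hb0 : B.leadingCoeff ≠ 0 := leadingCoeff_ne_zero.mpr hB0
      have hA2 : A ^ 2 = C c + P * B ^ 2 := by linear_combination hnorm
      have hPB : (P * B ^ 2).natDegree = 4 + 2 * m := by
        rw [natDegree_mul hP0 (pow_ne_zero 2 hB0), natDegree_pow, hPd]
      have hPBc : (P * B ^ 2).coeff (4 + 2 * m) = s⁻¹ ^ 2 * B.leadingCoeff ^ 2 := by
        rw [← hPB, coeff_natDegree, leadingCoeff_mul, leadingCoeff_pow, hPlc]
      have hCc : (C c : Polynomial ℂ).coeff (4 + 2 * m) = 0 := by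
        rw [coeff_C, if_neg (by omega)]
      have hsum := add_info (p := C c) (r := P * B ^ 2) (k := 4 + 2 * m)
        (by rw [natDegree_C]; omega) (le_of_eq hPB)
        (by rw [hCc, hPBc, zero_add]
            exact mul_ne_zero (pow_ne_zero 2 (inv_ne_zero hs0)) (pow_ne_zero 2 hb0))
      have hA2d : (A ^ 2).natDegree = 4 + 2 * m := by rw [hA2, hsum.2.1]
      rw [natDegree_pow] at hA2d
      have hAd : A.natDegree = m + 2 := by omega
      have hA2lc : A.leadingCoeff ^ 2 = s⁻¹ ^ 2 * B.leadingCoeff ^ 2 := by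
        rw [← leadingCoeff_pow, hA2, hsum.2.2, hCc, hPBc, zero_add]
      have hα0 : A.leadingCoeff ≠ 0 := by
        intro h0
        rw [h0] at hA2lc
        exact mul_ne_zero (pow_ne_zero 2 (inv_ne_zero hs0)) (pow_ne_zero 2 hb0)
          (by linear_combination -hA2lc)
      have hA0 : A ≠ 0 := leadingCoeff_ne_zero.mp hα0
      have hfact : (A - q * B) * (A + q * B) = C c - B ^ 2 := by
        linear_combination hnorm - B ^ 2 * hq2
      have hqBc : (q * B).coeff (m + 2) = s⁻¹ * B.leadingCoeff := by
        rw [show m + 2 = (q * B).natDegree by rw [natDegree_mul hq0 hB0, hqd]; ring,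
          coeff_natDegree, leadingCoeff_mul, hqlc]
      have hAc : A.coeff (m + 2) = A.leadingCoeff := by rw [← hAd, coeff_natDegree]
      have hsgn : (A.leadingCoeff - s⁻¹ * B.leadingCoeff)
          * (A.leadingCoeff + s⁻¹ * B.leadingCoeff) = 0 := by
        linear_combination hA2lc
      by_cases hcb : C c - B ^ 2 = 0
      · -- B is a constant, A = ± q B
        have hBd0 : B.natDegree = 0 := by
          have h1 : (B ^ 2).natDegree = 0 := by
            rw [show B ^ 2 = C c by linear_combination -hcb, natDegree_C]
          rw [natDegree_pow] at h1; omega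
        obtain ⟨d, hd⟩ := natDegree_eq_zero.mp hBd0
        have hd2 : d ^ 2 = c := by
          have : C (d ^ 2) = C c := by
            rw [map_pow, hd]; linear_combination -hcb
          exact C_injective this
        have hd0 : d ≠ 0 := fun h0 => hc (by rw [← hd2, h0]; ring)
        rcases mul_eq_zero.mp (by rw [hfact, hcb]) with h1 | h1
        · -- A = q * B
          refine ⟨d, hd0, 1, 0, ?_⟩
          rw [pow_one, pow_zero, mul_one]
          have halg : (algebraMap ℂ (S2P P) : ℂ →+* S2P P) d
              = Ideal.Quotient.mk (S2ideal P) (C (C d)) := rfl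
          rw [halg, ← map_mul, ← hd]
          apply congrArg
          have hAe : A = q * B := by linear_combination h1
          rw [hAe, ← hd, map_mul]; ring
        · -- A = - q * B
          refine ⟨-d, neg_ne_zero.mpr hd0, 0, 1, ?_⟩
          rw [pow_one, pow_zero, mul_one]
          have halg : (algebraMap ℂ (S2P P) : ℂ →+* S2P P) (-d)
              = Ideal.Quotient.mk (S2ideal P) (C (C (-d))) := rfl
          rw [halg, ← map_mul]
          apply congrArg
          have hAe : A = -(q * B) := by linear_combination h1
          rw [hAe, ← hd]
          simp only [map_neg, map_mul]
          ring
      · -- descent step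
        have hCcB : (C c - B ^ 2).natDegree ≤ 2 * m := by
          refine le_trans (natDegree_sub_le _ _) (max_le ?_ ?_)
          · rw [natDegree_C]; omega
          · rw [natDegree_pow]
        rcases mul_eq_zero.mp hsgn with hα | hα
        · -- leadingCoeff A = s⁻¹ * leadingCoeff B : multiply by λ₋
          have hsum2 := add_info (p := A) (r := q * B) (k := m + 2)
            (le_of_eq hAd) (le_of_eq (by rw [natDegree_mul hq0 hB0, hqd]; ring))
            (by rw [hAc, hqBc, show A.leadingCoeff = s⁻¹ * B.leadingCoeff by
                  linear_combination hα, ← two_mul]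
                exact mul_ne_zero two_ne_zero (mul_ne_zero (inv_ne_zero hs0) hb0))
          have hAmB0 : A - q * B ≠ 0 := by
            intro h0
            exact hcb (by rw [← hfact, h0, zero_mul])
          have hdlt : (A - q * B).natDegree + (m + 2) ≤ 2 * m := by
            rw [← hsum2.2.1, ← natDegree_mul hAmB0 hsum2.1, hfact]
            exact hCcB
          obtain ⟨A', hA'⟩ : ∃ x, x = A * q - P * B := ⟨_, rfl⟩
          obtain ⟨B', hB'⟩ : ∃ x, x = q * B - A := ⟨_, rfl⟩
          have hB'd : B'.natDegree < n := by
            have hB'' : B' = -(A - q * B) := by rw [hB']; ring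
            rw [hB'', natDegree_neg]
            omega
          have hnorm' : A' ^ 2 - P * B' ^ 2 = C c := by
            rw [hA', hB']
            linear_combination (q ^ 2 - P) * hnorm + C c * hq2
          obtain ⟨d, hd0, a, b, hrep⟩ := ih A' B' hB'd c hc hnorm'
          refine ⟨d, hd0, a + 1, b, ?_⟩
          have hstep : Ideal.Quotient.mk (S2ideal P) (C A + C B * X)
              = Ideal.Quotient.mk (S2ideal P) (C A' + C B' * X)
                * Ideal.Quotient.mk (S2ideal P) (C q + X) := by
            have h1 : (C q + X : Polynomial (Polynomial ℂ)) = C q + C 1 * X := by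
              rw [map_one, one_mul]
            rw [h1, rep_mul]
            apply congrArg
            rw [show A' * q + P * (B' * 1) = A by
                  rw [hA', hB']; linear_combination A * hq2,
                show A' * 1 + q * B' = B by
                  rw [hA', hB']; linear_combination B * hq2]
          rw [hstep, hrep]
          ring
        · -- leadingCoeff A = - s⁻¹ * leadingCoeff B : multiply by λ₊
          have hsum2 := add_info (p := A) (r := -(q * B)) (k := m + 2)
            (le_of_eq hAd) (le_of_eq (by rw [natDegree_neg, natDegree_mul hq0 hB0, hqd]; ring))
            (by rw [hAc, coeff_neg, hqBc, show A.leadingCoeff = -(s⁻¹ * B.leadingCoeff) by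
                  linear_combination hα]
                rw [show -(s⁻¹ * B.leadingCoeff) + -(s⁻¹ * B.leadingCoeff)
                    = -(2 * (s⁻¹ * B.leadingCoeff)) by ring]
                exact neg_ne_zero.mpr
                  (mul_ne_zero two_ne_zero (mul_ne_zero (inv_ne_zero hs0) hb0)))
          have hApB0 : A + q * B ≠ 0 := by
            intro h0
            exact hcb (by rw [← hfact, h0, mul_zero])
          have hAmB : A + -(q * B) = A - q * B := by ring
          rw [hAmB] at hsum2
          have hdlt : (m + 2) + (A + q * B).natDegree ≤ 2 * m := by
            rw [← hsum2.2.1, ← natDegree_mul hsum2.1 hApB0, hfact]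
            exact hCcB
          obtain ⟨A', hA'⟩ : ∃ x, x = A * q + P * B := ⟨_, rfl⟩
          obtain ⟨B', hB'⟩ : ∃ x, x = A + q * B := ⟨_, rfl⟩
          have hB'd : B'.natDegree < n := by rw [hB']; omega
          have hnorm' : A' ^ 2 - P * B' ^ 2 = C c := by
            rw [hA', hB']
            linear_combination (q ^ 2 - P) * hnorm + C c * hq2
          obtain ⟨d, hd0, a, b, hrep⟩ := ih A' B' hB'd c hc hnorm'
          refine ⟨d, hd0, a, b + 1, ?_⟩
          have hstep : Ideal.Quotient.mk (S2ideal P) (C A + C B * X)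
              = Ideal.Quotient.mk (S2ideal P) (C A' + C B' * X)
                * Ideal.Quotient.mk (S2ideal P) (C q - X) := by
            have h1 : (C q - X : Polynomial (Polynomial ℂ)) = C q + C (-1) * X := by
              rw [map_neg, map_one]; ring
            rw [h1, rep_mul]
            apply congrArg
            rw [show A' * q + P * (B' * -1) = A by
                  rw [hA', hB']; linear_combination A * hq2,
                show A' * -1 + q * B' = B by
                  rw [hA', hB']; linear_combination B * hq2]
          rw [hstep, hrep]
          ring

lemma pow_rep (hs0 : s ≠ 0)
    (hPd : P.natDegree = 4) (hPlc : P.leadingCoeff = s⁻¹ ^ 2)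
    (hqd : q.natDegree = 2) (hqlc : q.leadingCoeff = s⁻¹) :
    ∀ k : ℕ, ∃ A B : Polynomial ℂ,
      (Ideal.Quotient.mk (S2ideal P) (C q + X)) ^ (k + 1)
          = Ideal.Quotient.mk (S2ideal P) (C A + C B * X)
        ∧ (Ideal.Quotient.mk (S2ideal P) (C q - X)) ^ (k + 1)
          = Ideal.Quotient.mk (S2ideal P) (C A - C B * X)
        ∧ B ≠ 0 ∧ A.natDegree = B.natDegree + 2 ∧ A.leadingCoeff = s⁻¹ * B.leadingCoeff := by
  have hP0 : P ≠ 0 := fun h0 => by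
    rw [h0, leadingCoeff_zero] at hPlc
    exact (pow_ne_zero 2 (inv_ne_zero hs0)) hPlc.symm
  have hq0 : q ≠ 0 := fun h0 => by
    rw [h0, leadingCoeff_zero] at hqlc
    exact (inv_ne_zero hs0) hqlc.symm
  intro k
  induction k with
  | zero =>
    refine ⟨q, 1, ?_, ?_, one_ne_zero, by simp [hqd], by simp [hqlc]⟩
    · rw [pow_one, map_one, one_mul]
    · rw [pow_one, map_one, one_mul]
  | succ k ih =>
    obtain ⟨A, B, h1, h2, hB0, hABd, hABlc⟩ := ih
    have hb0 : B.leadingCoeff ≠ 0 := leadingCoeff_ne_zero.mpr hB0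
    have hα0 : A.leadingCoeff ≠ 0 := by
      rw [hABlc]; exact mul_ne_zero (inv_ne_zero hs0) hb0
    have hA0 : A ≠ 0 := leadingCoeff_ne_zero.mp hα0
    -- coefficients facts
    have hAc : A.coeff (B.natDegree + 2) = A.leadingCoeff := by rw [← hABd, coeff_natDegree]
    have hqBc : (q * B).coeff (B.natDegree + 2) = s⁻¹ * B.leadingCoeff := by
      rw [show B.natDegree + 2 = (q * B).natDegree by rw [natDegree_mul hq0 hB0, hqd]; ring,
        coeff_natDegree, leadingCoeff_mul, hqlc]
    have hB'info := add_info (p := A) (r := q * B) (k := B.natDegree + 2)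
      (le_of_eq hABd) (le_of_eq (by rw [natDegree_mul hq0 hB0, hqd]; ring))
      (by rw [hAc, hqBc, hABlc, ← two_mul]
          exact mul_ne_zero two_ne_zero (mul_ne_zero (inv_ne_zero hs0) hb0))
    have hAqc : (A * q).coeff (B.natDegree + 4) = s⁻¹ * A.leadingCoeff := by
      rw [show B.natDegree + 4 = (A * q).natDegree by
            rw [natDegree_mul hA0 hq0, hqd, hABd],
        coeff_natDegree, leadingCoeff_mul, hqlc]; ring
    have hPBc : (P * B).coeff (B.natDegree + 4) = s⁻¹ ^ 2 * B.leadingCoeff := by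
      rw [show B.natDegree + 4 = (P * B).natDegree by rw [natDegree_mul hP0 hB0, hPd]; ring,
        coeff_natDegree, leadingCoeff_mul, hPlc]
    have hA'info := add_info (p := A * q) (r := P * B) (k := B.natDegree + 4)
      (le_of_eq (by rw [natDegree_mul hA0 hq0, hqd, hABd]))
      (le_of_eq (by rw [natDegree_mul hP0 hB0, hPd]; ring))
      (by rw [hAqc, hPBc, hABlc]
          have : s⁻¹ * (s⁻¹ * B.leadingCoeff) + s⁻¹ ^ 2 * B.leadingCoeff
              = 2 * (s⁻¹ ^ 2 * B.leadingCoeff) := by ring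
          rw [this]
          exact mul_ne_zero two_ne_zero
            (mul_ne_zero (pow_ne_zero 2 (inv_ne_zero hs0)) hb0))
    refine ⟨A * q + P * B, A + q * B, ?_, ?_, hB'info.1, ?_, ?_⟩
    · rw [pow_succ, h1]
      have hX : (C q + X : Polynomial (Polynomial ℂ)) = C q + C 1 * X := by
        rw [map_one, one_mul]
      rw [hX, rep_mul]
      apply congrArg
      rw [show A * q + P * (B * 1) = A * q + P * B by ring,
        show A * 1 + q * B = A + q * B by ring]
    · rw [pow_succ, h2]
      have hL : (C A - C B * X : Polynomial (Polynomial ℂ)) = C A + C (-B) * X := by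
        rw [map_neg]; ring
      have hX : (C q - X : Polynomial (Polynomial ℂ)) = C q + C (-1) * X := by
        rw [map_neg, map_one]; ring
      rw [hL, hX, rep_mul]
      rw [show A * q + P * (-B * -1) = A * q + P * B by ring,
        show A * -1 + q * -B = -(A + q * B) by ring, map_neg]
      ring_nf
    · rw [hA'info.2.1, hB'info.2.1]
    · rw [hA'info.2.2, hB'info.2.2, hAqc, hPBc, hAc, hqBc, hABlc]
      ring
end Stmt16

/-- For `P = (t⁴ - 2βt² + 1)/(β² - 1)` with `β ≠ ±1`, setting
`q = (t² - β)/√(β²-1)` and `λ₀ = q + √P`, we have `λ₀(q - √P) = 1`, the unit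
group of `S_2(P)` is exactly `{c·λ₀^i : c ∈ ℂ*, i ∈ ℤ}` (with negative powers
of `λ₀` given by powers of its inverse `q - √P`), and it is isomorphic to
`ℂ* × ℤ`. -/
theorem stmt_16 (β : ℂ) (hβ : β ≠ 1) (hβ' : β ≠ -1) (s : ℂ) (hs : s ^ 2 = β ^ 2 - 1)
    (P q : Polynomial ℂ)
    (hP : P = C ((β ^ 2 - 1)⁻¹) * (X ^ 4 - C (2 * β) * X ^ 2 + 1))
    (hq : q = C s⁻¹ * (X ^ 2 - C β)) :
    (Ideal.Quotient.mk (S2ideal P) (C q) + Ideal.Quotient.mk (S2ideal P) X) *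
        (Ideal.Quotient.mk (S2ideal P) (C q) - Ideal.Quotient.mk (S2ideal P) X) = 1 ∧
    (∀ z : S2P P, IsUnit z ↔
      ∃ c : ℂ, c ≠ 0 ∧ ∃ a b : ℕ,
        z = (algebraMap ℂ (S2P P) : ℂ →+* S2P P) c *
          (Ideal.Quotient.mk (S2ideal P) (C q) + Ideal.Quotient.mk (S2ideal P) X) ^ a *
          (Ideal.Quotient.mk (S2ideal P) (C q) - Ideal.Quotient.mk (S2ideal P) X) ^ b) ∧
    Nonempty ((S2P P)ˣ ≃* ℂˣ × Multiplicative ℤ) := by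
  classical
  -- basic scalar facts
  have hβ1 : β ^ 2 - 1 ≠ 0 := by
    intro h0
    have h1 : (β - 1) * (β + 1) = 0 := by linear_combination h0
    rcases mul_eq_zero.mp h1 with h2 | h2
    · exact hβ (by linear_combination h2)
    · exact hβ' (by linear_combination h2)
  have hs0 : s ≠ 0 := by
    intro h0
    rw [h0] at hs
    exact hβ1 (by linear_combination -hs)
  have hinv : (β ^ 2 - 1)⁻¹ = s⁻¹ ^ 2 := by rw [← hs, ← inv_pow]
  -- the key algebraic identity q² = P + 1
  have hcc : s⁻¹ ^ 2 * (β ^ 2 - 1) = 1 := by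
    rw [← hs]
    field_simp
  have hq2 : q ^ 2 = P + 1 := by
    rw [hq, hP, hinv]
    have h3 : (C s⁻¹ : Polynomial ℂ) ^ 2 * ((C β) ^ 2 - 1) = 1 := by
      rw [← map_pow, ← map_pow, ← C_1, ← map_sub, ← map_mul, hcc]
    have h4 : (C (s⁻¹ ^ 2) : Polynomial ℂ) = (C s⁻¹) ^ 2 := by rw [map_pow]
    have h5 : (C (2 * β) : Polynomial ℂ) = 2 * C β := by
      rw [map_mul, map_ofNat]
    rw [h4, h5]
    linear_combination h3
  -- degrees and leading coefficients
  have hQd : (X ^ 4 - C (2 * β) * X ^ 2 + 1 : Polynomial ℂ).natDegree = 4 := by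
    compute_degree!
  have hPd : P.natDegree = 4 := by
    rw [hP, natDegree_C_mul (inv_ne_zero hβ1), hQd]
  have hPlc : P.leadingCoeff = s⁻¹ ^ 2 := by
    rw [leadingCoeff, hPd, hP, coeff_C_mul]
    simp only [coeff_add, coeff_sub, coeff_X_pow, coeff_one, coeff_C_mul]
    norm_num [hinv]
  have hqd : q.natDegree = 2 := by
    rw [hq, natDegree_C_mul (inv_ne_zero hs0)]
    compute_degree!
  have hqlc : q.leadingCoeff = s⁻¹ := by
    rw [leadingCoeff, hqd, hq, coeff_C_mul]
    simp only [coeff_sub, coeff_X_pow, coeff_C]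
    norm_num
  -- abbreviations
  set Λp : S2P P := Ideal.Quotient.mk (S2ideal P) (C q + X) with hΛp
  set Λm : S2P P := Ideal.Quotient.mk (S2ideal P) (C q - X) with hΛm
  have hplus : Ideal.Quotient.mk (S2ideal P) (C q) + Ideal.Quotient.mk (S2ideal P) X = Λp :=
    (map_add _ _ _).symm
  have hminus : Ideal.Quotient.mk (S2ideal P) (C q) - Ideal.Quotient.mk (S2ideal P) X = Λm :=
    (map_sub _ _ _).symm
  have hq2C : (C q : Polynomial (Polynomial ℂ)) ^ 2 = C P + 1 := by
    rw [← map_pow, hq2, map_add, map_one]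
  have hU1 : Λp * Λm = 1 := by
    rw [hΛp, hΛm, ← map_mul]
    have h6 : Ideal.Quotient.mk (S2ideal P) ((C q + X) * (C q - X))
        = Ideal.Quotient.mk (S2ideal P) 1 :=
      Stmt16.mk_eq_mk (-1) (by linear_combination hq2C)
    rw [h6, map_one]
  have hU2 : Λm * Λp = 1 := by
    rw [hΛp, hΛm, ← map_mul]
    have h6 : Ideal.Quotient.mk (S2ideal P) ((C q - X) * (C q + X))
        = Ideal.Quotient.mk (S2ideal P) 1 :=
      Stmt16.mk_eq_mk (-1) (by linear_combination hq2C)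
    rw [h6, map_one]
  have hone : (1 : S2P P) = Ideal.Quotient.mk (S2ideal P) (C 1 + C 0 * X) := by
    simp
  have halg : ∀ d : ℂ, (algebraMap ℂ (S2P P) : ℂ →+* S2P P) d
      = Ideal.Quotient.mk (S2ideal P) (C (C d) + C 0 * X) := by
    intro d
    simp only [map_zero, zero_mul, add_zero]
    rfl
  -- characterization of units
  have hunits : ∀ z : S2P P, IsUnit z ↔
      ∃ c : ℂ, c ≠ 0 ∧ ∃ a b : ℕ, z = (algebraMap ℂ (S2P P) : ℂ →+* S2P P) c * Λp ^ a * Λm ^ b := by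
    intro z
    constructor
    · intro hz
      obtain ⟨A, B, hAB⟩ := Stmt16.rep_surj z
      obtain ⟨A', B', hAB'⟩ := Stmt16.rep_surj (((hz.unit⁻¹ : (S2P P)ˣ) : S2P P))
      have hmul : Ideal.Quotient.mk (S2ideal P) (C A + C B * X)
          * Ideal.Quotient.mk (S2ideal P) (C A' + C B' * X) = 1 := by
        rw [← hAB, ← hAB']
        exact hz.mul_val_inv
      rw [Stmt16.rep_mul, hone] at hmul
      obtain ⟨h1, h2⟩ := Stmt16.rep_inj hmul
      have hNu : (A ^ 2 - P * B ^ 2) * (A' ^ 2 - P * B' ^ 2) = 1 := by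
        linear_combination (A * A' + P * (B * B') + 1) * h1 - P * (A * B' + A' * B) * h2
      obtain ⟨c, hcu, hcC⟩ := Polynomial.isUnit_iff.mp (IsUnit.of_mul_eq_one _ hNu)
      obtain ⟨d, hd0, a, b, hrep⟩ :=
        Stmt16.descent hs0 hq2 hPd hPlc hqd hqlc (B.natDegree + 1) A B (lt_add_one _)
          c hcu.ne_zero hcC.symm
      exact ⟨d, hd0, a, b, by rw [hAB, hrep]⟩
    · rintro ⟨c, hc, a, b, rfl⟩
      have h1 : IsUnit ((algebraMap ℂ (S2P P) : ℂ →+* S2P P) c) :=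
        (isUnit_iff_ne_zero.mpr hc).map ((algebraMap ℂ (S2P P) : ℂ →+* S2P P))
      have h2 : IsUnit Λp := ⟨⟨Λp, Λm, hU1, hU2⟩, rfl⟩
      have h3 : IsUnit Λm := ⟨⟨Λm, Λp, hU2, hU1⟩, rfl⟩
      exact (h1.mul (h2.pow a)).mul (h3.pow b)
  refine ⟨by rw [hplus, hminus]; exact hU1, ?_, ?_⟩
  · intro z
    rw [hplus, hminus]
    exact hunits z
  -- the group isomorphism
  · set U : (S2P P)ˣ := ⟨Λp, Λm, hU1, hU2⟩ with hUdef
    have hUinv : ((U⁻¹ : (S2P P)ˣ) : S2P P) = Λm := rfl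
    set f : ℂˣ × Multiplicative ℤ →* (S2P P)ˣ := MonoidHom.mk'
      (fun p => Units.map ((algebraMap ℂ (S2P P) : ℂ →+* S2P P)).toMonoidHom p.1
          * U ^ (Multiplicative.toAdd p.2))
      (by
        intro x y
        apply Units.ext
        simp only [Prod.fst_mul, Prod.snd_mul, map_mul, toAdd_mul, zpow_add,
          Units.val_mul]
        ring) with hfdef
    have hfval : ∀ (c : ℂˣ) (n : ℤ),
        ((f (c, Multiplicative.ofAdd n) : (S2P P)ˣ) : S2P P)
          = (algebraMap ℂ (S2P P) : ℂ →+* S2P P) (c : ℂ) * ((U ^ n : (S2P P)ˣ) : S2P P) := by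
      intro c n
      simp [hfdef]
    have hinj : Function.Injective f := by
      rw [injective_iff_map_eq_one]
      rintro ⟨c, n⟩ hfn
      have hval : (algebraMap ℂ (S2P P) : ℂ →+* S2P P) (c : ℂ)
          * ((U ^ (Multiplicative.toAdd n) : (S2P P)ˣ) : S2P P) = 1 := by
        have := congrArg (Units.val) hfn
        simpa [hfdef] using this
      have hn0 : Multiplicative.toAdd n = 0 := by
        by_contra hn
        rcases lt_or_gt_of_ne hn with hlt | hgt
        · -- negative power : use Λm
          obtain ⟨j, hj⟩ : ∃ j : ℕ, Multiplicative.toAdd n = -((j : ℤ) + 1) := by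
            refine ⟨(-(Multiplicative.toAdd n) - 1).toNat, ?_⟩
            omega
          rw [hj] at hval
          have hzp : ((U ^ (-((j : ℤ) + 1)) : (S2P P)ˣ) : S2P P) = Λm ^ (j + 1) := by
            rw [zpow_neg, ← inv_zpow]
            rw [show ((j : ℤ) + 1) = ((j + 1 : ℕ) : ℤ) by push_cast; ring, zpow_natCast]
            rw [Units.val_pow_eq_pow_val, hUinv]
          rw [hzp] at hval
          obtain ⟨A, B, _, h2, hB0, _, _⟩ := Stmt16.pow_rep hs0 hPd hPlc hqd hqlc j
          rw [h2] at hval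
          have hneg : (C A - C B * X : Polynomial (Polynomial ℂ)) = C A + C (-B) * X := by
            rw [map_neg]; ring
          rw [hneg, halg, Stmt16.rep_mul, hone] at hval
          obtain ⟨_, hBB⟩ := Stmt16.rep_inj hval
          have hCB : (C ((c : ℂ)) : Polynomial ℂ) * B = 0 := by linear_combination -hBB
          rcases mul_eq_zero.mp hCB with h | h
          · exact (C_ne_zero.mpr c.ne_zero) h
          · exact hB0 h
        · -- positive power : use Λp
          obtain ⟨j, hj⟩ : ∃ j : ℕ, Multiplicative.toAdd n = (j : ℤ) + 1 := by
            refine ⟨(Multiplicative.toAdd n - 1).toNat, ?_⟩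
            omega
          rw [hj] at hval
          have hzp : ((U ^ ((j : ℤ) + 1) : (S2P P)ˣ) : S2P P) = Λp ^ (j + 1) := by
            rw [show ((j : ℤ) + 1) = ((j + 1 : ℕ) : ℤ) by push_cast; ring, zpow_natCast]
            rw [Units.val_pow_eq_pow_val]
          rw [hzp] at hval
          obtain ⟨A, B, h1, _, hB0, _, _⟩ := Stmt16.pow_rep hs0 hPd hPlc hqd hqlc j
          rw [h1, halg, Stmt16.rep_mul, hone] at hval
          obtain ⟨_, hBB⟩ := Stmt16.rep_inj hval
          have hCB : (C ((c : ℂ)) : Polynomial ℂ) * B = 0 := by linear_combination hBB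
          rcases mul_eq_zero.mp hCB with h | h
          · exact (C_ne_zero.mpr c.ne_zero) h
          · exact hB0 h
      rw [hn0] at hval
      rw [zpow_zero, Units.val_one, mul_one] at hval
      have hc1 : (c : ℂ) = 1 := by
        have : Ideal.Quotient.mk (S2ideal P) (C (C (c : ℂ)) + C 0 * X)
            = Ideal.Quotient.mk (S2ideal P) (C 1 + C 0 * X) := by
          rw [← halg, ← hone, hval]
        obtain ⟨h1, _⟩ := Stmt16.rep_inj this
        exact C_injective h1
      have hn1 : n = 1 := by
        have := congrArg Multiplicative.ofAdd hn0
        simpa using this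
      rw [hn1]
      ext
      · exact hc1
      · rfl
    have hsurj : Function.Surjective f := by
      intro z
      obtain ⟨c, hc, a, b, hz⟩ := (hunits (z : S2P P)).mp z.isUnit
      refine ⟨(Units.mk0 c hc, Multiplicative.ofAdd ((a : ℤ) - (b : ℤ))), ?_⟩
      apply Units.ext
      rw [hfval]
      have hzp : ((U ^ ((a : ℤ) - (b : ℤ)) : (S2P P)ˣ) : S2P P) = Λp ^ a * Λm ^ b := by
        rw [zpow_sub, zpow_natCast, zpow_natCast, ← inv_pow, Units.val_mul,
          Units.val_pow_eq_pow_val, Units.val_pow_eq_pow_val, hUinv]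
      rw [hzp, Units.val_mk0, hz]; ring
    exact ⟨(MulEquiv.ofBijective f ⟨hinj, hsurj⟩).symm⟩
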